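/- arXiv:2404.13155 — 2 statements merged into one kernel-verified Lean document; each statement's English description precedes it below -/
import Mathlib

section
/- For every integer n ≥ 5, (n−4)·rcr(K_n) ≥ n·rcr(K_{n−1}), where rcr denotes the rectilinear crossing number and K_n the complete graph on n vertices. -/
/-- A rectilinear drawing: an injective map of the vertices into the plane
with no three vertex images collinear. -/
def IsRectilinearDrawing {V : Type*} (f : V → ℝ × ℝ) : Prop :=
  Function.Injective f ∧
    ∀ a b c : V, a ≠ b → a ≠ c → b ≠ c →
      ¬ Collinear ℝ ({f a, f b, f c} : Set (ℝ × ℝ))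

/-- The open straight-line segment joining the images of the endpoints of an edge. -/
def edgeSeg {V : Type*} (f : V → ℝ × ℝ) : Sym2 V → Set (ℝ × ℝ) :=
  Sym2.lift ⟨fun a b => openSegment ℝ (f a) (f b), fun a b => openSegment_symm ℝ (f a) (f b)⟩

/-- Two edges (with disjoint vertex sets) cross if their open segments meet. -/
def EdgesCross {V : Type*} (f : V → ℝ × ℝ) (e₁ e₂ : Sym2 V) : Prop :=
  (∀ v, v ∈ e₁ → v ∉ e₂) ∧ (edgeSeg f e₁ ∩ edgeSeg f e₂).Nonempty

lemma edgesCross_symm {V : Type*} (f : V → ℝ × ℝ) : Symmetric (EdgesCross f) :=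
  fun _ _ h => ⟨fun v hv hv' => h.1 v hv' hv, by rw [Set.inter_comm]; exact h.2⟩

/-- The crossing number of a drawing: the number of unordered pairs of edges of `G`
that cross in the drawing. -/
noncomputable def crossingNumber {V : Type*} (G : SimpleGraph V) (f : V → ℝ × ℝ) : ℕ :=
  Set.ncard {p : Sym2 (Sym2 V) |
    (∀ e ∈ p, e ∈ G.edgeSet) ∧ p ∈ Sym2.fromRel ⟨edgesCross_symm f⟩}

/-- The rectilinear crossing number of a graph. -/
noncomputable def rcr {V : Type*} (G : SimpleGraph V) : ℕ :=
  sInf {k | ∃ f : V → ℝ × ℝ, IsRectilinearDrawing f ∧ crossingNumber G f = k}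

/-- The complete balanced `r`-partite graph with `r` parts of size `m`. -/
def completeBalanced (r m : ℕ) : SimpleGraph (Fin r × Fin m) :=
  SimpleGraph.comap Prod.fst ⊤

instance (r m : ℕ) : DecidableRel (completeBalanced r m).Adj :=
  fun u v => inferInstanceAs (Decidable (u.1 ≠ v.1))

/-- The balanced layered graph with `r` layers of size `m`: all edges between
consecutive layers. -/
def layeredGraph (r m : ℕ) : SimpleGraph (Fin r × Fin m) where
  Adj u v := u.1.1 + 1 = v.1.1 ∨ v.1.1 + 1 = u.1.1
  symm := ⟨fun _ _ h => h.symm⟩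
  loopless := ⟨fun u h => by cases h <;> omega⟩

instance (r m : ℕ) : DecidableRel (layeredGraph r m).Adj :=
  fun u v => inferInstanceAs (Decidable (u.1.1 + 1 = v.1.1 ∨ v.1.1 + 1 = u.1.1))

/-- The `s`-fold blow-up of a graph `G`. -/
def blowup {V : Type*} (G : SimpleGraph V) (s : ℕ) : SimpleGraph (V × Fin s) :=
  SimpleGraph.comap Prod.fst G

lemma moment_drawing (k : ℕ) : ∃ f : Fin k → ℝ × ℝ, IsRectilinearDrawing f := by
  refine ⟨fun i => ((i : ℝ), (i : ℝ)^2), ?_, ?_⟩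
  · intro i j h
    have h1 : ((i : ℕ) : ℝ) = ((j : ℕ) : ℝ) := congrArg Prod.fst h
    exact Fin.ext (Nat.cast_injective h1)
  · intro a b c hab hac hbc hcol
    set A := ((a : ℕ) : ℝ) with hA
    set B := ((b : ℕ) : ℝ) with hB
    set C := ((c : ℕ) : ℝ) with hC
    have hAB : A ≠ B := fun h => hab (Fin.ext (Nat.cast_injective h))
    have hAC : A ≠ C := fun h => hac (Fin.ext (Nat.cast_injective h))
    have hBC : B ≠ C := fun h => hbc (Fin.ext (Nat.cast_injective h))
    rw [collinear_iff_of_mem (Set.mem_insert _ _)] at hcol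
    obtain ⟨v, hv⟩ := hcol
    obtain ⟨r₁, hr₁⟩ := hv (B, B^2) (by simp [hB])
    obtain ⟨r₂, hr₂⟩ := hv (C, C^2) (by simp [Set.mem_insert_iff, hC])
    have e1 : B = r₁ * v.1 + A := congrArg Prod.fst hr₁
    have e2 : B^2 = r₁ * v.2 + A^2 := congrArg Prod.snd hr₁
    have e3 : C = r₂ * v.1 + A := congrArg Prod.fst hr₂
    have e4 : C^2 = r₂ * v.2 + A^2 := congrArg Prod.snd hr₂
    have key : (B - A) * (C - A) * (C - B) = 0 := by nlinarith [e1, e2, e3, e4]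
    rcases mul_eq_zero.mp key with h | h
    · rcases mul_eq_zero.mp h with h | h
      · exact hAB (by linarith [sub_eq_zero.mp h])
      · exact hAC (by linarith [sub_eq_zero.mp h])
    · exact hBC (by linarith [sub_eq_zero.mp h])

lemma isRectilinearDrawing_comp {V W : Type*} {f : V → ℝ × ℝ} {g : W → V}
    (hf : IsRectilinearDrawing f) (hg : Function.Injective g) :
    IsRectilinearDrawing (f ∘ g) :=
  ⟨hf.1.comp hg, fun a b c hab hac hbc =>
    hf.2 (g a) (g b) (g c) (hg.ne hab) (hg.ne hac) (hg.ne hbc)⟩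

lemma edgeSeg_comp {V W : Type*} (f : V → ℝ × ℝ) (g : W → V) (e : Sym2 W) :
    edgeSeg (f ∘ g) e = edgeSeg f (e.map g) := by
  induction e using Sym2.inductionOn with
  | hf a b => rfl

lemma edgesCross_comp {V W : Type*} (f : V → ℝ × ℝ) {g : W → V} (hg : Function.Injective g)
    {e₁ e₂ : Sym2 W} (h : EdgesCross (f ∘ g) e₁ e₂) :
    EdgesCross f (e₁.map g) (e₂.map g) := by
  refine ⟨?_, ?_⟩
  · intro v hv1 hv2
    rw [Sym2.mem_map] at hv1 hv2
    obtain ⟨a, ha, rfl⟩ := hv1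
    obtain ⟨b, hb, hba⟩ := hv2
    exact h.1 a ha (hg hba ▸ hb)
  · rw [← edgeSeg_comp, ← edgeSeg_comp]; exact h.2

/-- For every integer `n ≥ 5`, `(n − 4)·rcr(K_n) ≥ n·rcr(K_{n−1})`. -/
theorem stmt1 (n : ℕ) (hn : 5 ≤ n) :
    n * rcr (⊤ : SimpleGraph (Fin (n - 1))) ≤ (n - 4) * rcr (⊤ : SimpleGraph (Fin n)) := by
  classical
  obtain ⟨m, rfl⟩ : ∃ m, n = m + 1 := ⟨n - 1, by omega⟩
  -- optimal drawing of K_{m+1}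
  have hSne : {k | ∃ f : Fin (m+1) → ℝ × ℝ, IsRectilinearDrawing f ∧
      crossingNumber (⊤ : SimpleGraph (Fin (m+1))) f = k}.Nonempty := by
    obtain ⟨f, hf⟩ := moment_drawing (m+1)
    exact ⟨_, f, hf, rfl⟩
  obtain ⟨f, hf, hfcr⟩ := Nat.sInf_mem hSne
  set X : Set (Sym2 (Sym2 (Fin (m+1)))) := {p |
    (∀ e ∈ p, e ∈ (⊤ : SimpleGraph (Fin (m+1))).edgeSet) ∧
      p ∈ Sym2.fromRel ⟨edgesCross_symm f⟩} with hX
  have hXfin : X.Finite := Set.toFinite X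
  set XF : Finset (Sym2 (Sym2 (Fin (m+1)))) := hXfin.toFinset with hXF
  have hcr : crossingNumber (⊤ : SimpleGraph (Fin (m+1))) f = XF.card := by
    rw [crossingNumber, Set.ncard_eq_toFinset_card X hXfin]
  -- per-vertex bound
  have key : ∀ v : Fin (m+1),
      rcr (⊤ : SimpleGraph (Fin m)) ≤ (XF.filter (fun p => ∀ e ∈ p, v ∉ e)).card := by
    intro v
    set g : Fin m → Fin (m+1) := v.succAbove with hg
    have hginj : Function.Injective g := Fin.succAbove_right_injective
    have h1 : rcr (⊤ : SimpleGraph (Fin m)) ≤ crossingNumber (⊤ : SimpleGraph (Fin m)) (f ∘ g) :=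
      Nat.sInf_le ⟨f ∘ g, isRectilinearDrawing_comp hf hginj, rfl⟩
    refine h1.trans ?_
    set Φ : Sym2 (Sym2 (Fin m)) → Sym2 (Sym2 (Fin (m+1))) := Sym2.map (Sym2.map g) with hΦ
    have hΦinj : Function.Injective Φ := Sym2.map.injective (Sym2.map.injective hginj)
    set S' : Set (Sym2 (Sym2 (Fin m))) := {p |
      (∀ e ∈ p, e ∈ (⊤ : SimpleGraph (Fin m)).edgeSet) ∧
        p ∈ Sym2.fromRel ⟨edgesCross_symm (f ∘ g)⟩} with hS'
    have hsub : Φ '' S' ⊆ ↑(XF.filter (fun p => ∀ e ∈ p, v ∉ e)) := by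
      rintro _ ⟨p, hp, rfl⟩
      simp only [Finset.coe_filter, Set.mem_setOf_eq, Finset.mem_coe, hXF,
        Set.Finite.mem_toFinset]
      induction p using Sym2.inductionOn with
      | hf e₁ e₂ =>
        obtain ⟨hedges, hcross⟩ := hp
        rw [Sym2.fromRel_prop] at hcross
        have hcross' : EdgesCross f (e₁.map g) (e₂.map g) := edgesCross_comp f hginj hcross
        have hΦp : Φ s(e₁, e₂) = s(e₁.map g, e₂.map g) := rfl
        rw [hΦp]
        refine ⟨⟨?_, ?_⟩, ?_⟩
        · intro e he
          rw [Sym2.mem_iff] at he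
          rcases he with rfl | rfl
          · -- e₁.map g ∈ edgeSet
            have h₁ := hedges e₁ (Sym2.mem_mk_left _ _)
            induction e₁ using Sym2.inductionOn with
            | hf a b =>
              rw [Sym2.map_pair_eq]
              simp only [SimpleGraph.mem_edgeSet, SimpleGraph.top_adj] at h₁ ⊢
              exact hginj.ne h₁
          · have h₂ := hedges e₂ (Sym2.mem_mk_right _ _)
            induction e₂ using Sym2.inductionOn with
            | hf a b =>
              rw [Sym2.map_pair_eq]
              simp only [SimpleGraph.mem_edgeSet, SimpleGraph.top_adj] at h₂ ⊢
              exact hginj.ne h₂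
        · rw [Sym2.fromRel_prop]; exact hcross'
        · intro e he hv
          rw [Sym2.mem_iff] at he
          rcases he with rfl | rfl <;>
          · rw [Sym2.mem_map] at hv
            obtain ⟨a, _, ha⟩ := hv
            exact Fin.succAbove_ne v a ha
    calc crossingNumber (⊤ : SimpleGraph (Fin m)) (f ∘ g) = S'.ncard := rfl
      _ = (Φ '' S').ncard := (Set.ncard_image_of_injective S' hΦinj).symm
      _ ≤ ((XF.filter (fun p => ∀ e ∈ p, v ∉ e)) : Finset _).card := by
          rw [← Set.ncard_coe_finset]
          exact Set.ncard_le_ncard hsub (Set.toFinite _)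
  -- double counting
  have hdc : ∑ v : Fin (m+1), (XF.filter (fun p => ∀ e ∈ p, v ∉ e)).card
      = ∑ p ∈ XF, ((Finset.univ : Finset (Fin (m+1))).filter (fun v => ∀ e ∈ p, v ∉ e)).card := by
    simp only [Finset.card_filter]
    exact Finset.sum_comm
  -- per-pair count
  have hcount : ∀ p ∈ XF,
      ((Finset.univ : Finset (Fin (m+1))).filter (fun v => ∀ e ∈ p, v ∉ e)).card = m + 1 - 4 := by
    intro p hp
    rw [hXF, Set.Finite.mem_toFinset] at hp
    induction p using Sym2.inductionOn with
    | hf e₁ e₂ =>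
      obtain ⟨hedges, hcross⟩ := hp
      rw [Sym2.fromRel_prop] at hcross
      induction e₁ using Sym2.inductionOn with
      | hf a b =>
        induction e₂ using Sym2.inductionOn with
        | hf c d =>
          have hab : a ≠ b := by
            have := hedges s(a,b) (Sym2.mem_mk_left _ _)
            simpa using this
          have hcd : c ≠ d := by
            have := hedges s(c,d) (Sym2.mem_mk_right _ _)
            simpa using this
          have hdisj := hcross.1
          have hac : a ≠ c := fun h => hdisj a (Sym2.mem_mk_left _ _) (h ▸ Sym2.mem_mk_left _ _)
          have had : a ≠ d := fun h => hdisj a (Sym2.mem_mk_left _ _) (h ▸ Sym2.mem_mk_right _ _)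
          have hbc : b ≠ c := fun h => hdisj b (Sym2.mem_mk_right _ _) (h ▸ Sym2.mem_mk_left _ _)
          have hbd : b ≠ d := fun h => hdisj b (Sym2.mem_mk_right _ _) (h ▸ Sym2.mem_mk_right _ _)
          have hfe : (Finset.univ.filter (fun v => ∀ e ∈ s(s(a,b),s(c,d)), v ∉ e))
              = ({a, b, c, d} : Finset (Fin (m+1)))ᶜ := by
            ext v
            simp only [Finset.mem_filter, Finset.mem_univ, true_and, Finset.mem_compl,
              Finset.mem_insert, Finset.mem_singleton, Sym2.mem_iff]
            constructor
            · intro h hv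
              rcases hv with rfl | rfl | rfl | rfl
              · exact h s(v,b) (Or.inl rfl) (Sym2.mem_mk_left _ _)
              · exact h s(a,v) (Or.inl rfl) (Sym2.mem_mk_right _ _)
              · exact h s(v,d) (Or.inr rfl) (Sym2.mem_mk_left _ _)
              · exact h s(c,v) (Or.inr rfl) (Sym2.mem_mk_right _ _)
            · intro h e he hv
              rcases he with rfl | rfl <;> rw [Sym2.mem_iff] at hv <;>
                rcases hv with rfl | rfl <;> simp_all
          rw [hfe, Finset.card_compl]
          have hc4 : ({a, b, c, d} : Finset (Fin (m+1))).card = 4 := by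
            rw [Finset.card_insert_of_notMem (by simp [hab, hac, had]),
              Finset.card_insert_of_notMem (by simp [hbc, hbd]),
              Finset.card_insert_of_notMem (by simp [hcd]), Finset.card_singleton]
          rw [hc4, Fintype.card_fin]
  -- put together
  have step1 : (m + 1) * rcr (⊤ : SimpleGraph (Fin m))
      ≤ ∑ v : Fin (m+1), (XF.filter (fun p => ∀ e ∈ p, v ∉ e)).card := by
    calc (m + 1) * rcr (⊤ : SimpleGraph (Fin m))
        = ∑ _v : Fin (m+1), rcr (⊤ : SimpleGraph (Fin m)) := by
          rw [Finset.sum_const, Finset.card_univ, Fintype.card_fin, smul_eq_mul]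
      _ ≤ _ := Finset.sum_le_sum (fun v _ => key v)
  have step2 : ∑ v : Fin (m+1), (XF.filter (fun p => ∀ e ∈ p, v ∉ e)).card
      = (m + 1 - 4) * XF.card := by
    rw [hdc, Finset.sum_congr rfl hcount, Finset.sum_const, smul_eq_mul, mul_comm]
  show (m+1) * rcr (⊤ : SimpleGraph (Fin m)) ≤ (m + 1 - 4) * rcr (⊤ : SimpleGraph (Fin (m+1)))
  rw [show rcr (⊤ : SimpleGraph (Fin (m+1))) = crossingNumber (⊤ : SimpleGraph (Fin (m+1))) f from hfcr.symm, hcr]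
  exact step1.trans (le_of_eq step2)
end

section
/- Let r ≥ 4 be an integer and let n be a positive multiple of r. Then rcr(K_n^r) ≥ rcr(K_r) · (n/r)⁴, where rcr denotes the rectilinear crossing number, K_r the complete graph on r vertices, and K_n^r the complete balanced r-partite graph. -/
lemma parabola_noncollinear {a b c : ℝ} (hab : a ≠ b) (hac : a ≠ c) (hbc : b ≠ c) :
    ¬ Collinear ℝ ({(a, a^2), (b, b^2), (c, c^2)} : Set (ℝ × ℝ)) := by
  intro h
  rw [collinear_iff_of_mem (Set.mem_insert _ _)] at h
  obtain ⟨v, hv⟩ := h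
  obtain ⟨tb, htb⟩ := hv (b, b^2) (by simp)
  obtain ⟨tc, htc⟩ := hv (c, c^2) (by simp)
  have e1 : b = tb * v.1 + a := congrArg Prod.fst htb
  have e2 : b^2 = tb * v.2 + a^2 := congrArg Prod.snd htb
  have e3 : c = tc * v.1 + a := congrArg Prod.fst htc
  have e4 : c^2 = tc * v.2 + a^2 := congrArg Prod.snd htc
  have h5 : (b-a)*(c^2-a^2) = (c-a)*(b^2-a^2) := by
    rw [show b - a = tb * v.1 by linarith, show c^2 - a^2 = tc * v.2 by linarith,
      show c - a = tc * v.1 by linarith, show b^2 - a^2 = tb * v.2 by linarith]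
    ring
  have h6 : (b-a)*((c-a)*(c-b)) = 0 := by linear_combination h5
  rcases mul_eq_zero.1 h6 with h | h
  · exact hab (by linarith)
  rcases mul_eq_zero.1 h with h | h
  · exact hac (by linarith)
  · exact hbc (by linarith)
lemma exists_drawing (r k : ℕ) : ∃ f : Fin r × Fin k → ℝ × ℝ, IsRectilinearDrawing f := by
  classical
  set g : Fin r × Fin k → ℝ := fun v => ((finProdFinEquiv v : Fin (r * k)) : ℕ)
  have hg : Function.Injective g := by
    intro u v h
    exact finProdFinEquiv.injective (Fin.val_injective (Nat.cast_injective h))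
  refine ⟨fun v => (g v, (g v)^2), ?_, ?_⟩
  · intro u v h
    exact hg (congrArg Prod.fst h)
  · intro a b c hab hac hbc
    exact parabola_noncollinear (fun h => hab (hg h)) (fun h => hac (hg h)) (fun h => hbc (hg h))
lemma edgeSeg_map {V W : Type*} (f : W → ℝ × ℝ) (g : V → W) (e : Sym2 V) :
    edgeSeg f (Sym2.map g e) = edgeSeg (f ∘ g) e := by
  induction e using Sym2.inductionOn with
  | hf x y => simp [edgeSeg, Sym2.map_pair_eq]

lemma crossing_map {V W : Type*} (f : W → ℝ × ℝ) (g : V → W) (hg : Function.Injective g)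
    {e₁ e₂ : Sym2 V} (h : EdgesCross (f ∘ g) e₁ e₂) :
    EdgesCross f (Sym2.map g e₁) (Sym2.map g e₂) := by
  constructor
  · intro w hw1 hw2
    rw [Sym2.mem_map] at hw1 hw2
    obtain ⟨a, ha, rfl⟩ := hw1
    obtain ⟨b, hb, hgb⟩ := hw2
    exact h.1 a ha (hg hgb ▸ hb)
  · rw [edgeSeg_map, edgeSeg_map]; exact h.2
open Finset in
lemma fiber_bound {r k : ℕ} (hr : 4 ≤ r) (x y z w : Fin r × Fin k)
    (hxy : x.1 ≠ y.1) (hzw : z.1 ≠ w.1) (hxz : x ≠ z) (hxw : x ≠ w) (hyz : y ≠ z) (hyw : y ≠ w) :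
    (Finset.univ.filter (fun t : Fin r → Fin k =>
      t x.1 = x.2 ∧ t y.1 = y.2 ∧ t z.1 = z.2 ∧ t w.1 = w.2)).card ≤ k ^ (r - 4) := by
  classical
  by_cases hd : x.1 ≠ z.1 ∧ x.1 ≠ w.1 ∧ y.1 ≠ z.1 ∧ y.1 ≠ w.1
  · obtain ⟨h1, h2, h3, h4⟩ := hd
    set s : Finset (Fin r) := {x.1, y.1, z.1, w.1} with hs
    have hscard : s.card = 4 := by
      rw [hs, card_insert_of_notMem (by simp [hxy, h1, h2]),
        card_insert_of_notMem (by simp [h3, h4]),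
        card_insert_of_notMem (by simp [hzw]), card_singleton]
    have key : (Finset.univ.filter (fun t : Fin r → Fin k =>
        t x.1 = x.2 ∧ t y.1 = y.2 ∧ t z.1 = z.2 ∧ t w.1 = w.2)).card
        = Fintype.card {t : Fin r → Fin k //
          t x.1 = x.2 ∧ t y.1 = y.2 ∧ t z.1 = z.2 ∧ t w.1 = w.2} :=
      (Fintype.card_subtype _).symm
    rw [key]
    have hinj : Function.Injective
        (fun (t : {t : Fin r → Fin k //
          t x.1 = x.2 ∧ t y.1 = y.2 ∧ t z.1 = z.2 ∧ t w.1 = w.2}) =>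
          (fun v : {v : Fin r // v ∉ s} => t.1 v.1)) := by
      rintro ⟨t₁, a1, a2, a3, a4⟩ ⟨t₂, b1, b2, b3, b4⟩ h
      apply Subtype.ext
      funext v
      show t₁ v = t₂ v
      by_cases hv : v ∈ s
      · rw [hs] at hv
        simp only [mem_insert, mem_singleton] at hv
        rcases hv with rfl | rfl | rfl | rfl
        · rw [a1, b1]
        · rw [a2, b2]
        · rw [a3, b3]
        · rw [a4, b4]
      · exact congrFun h ⟨v, hv⟩
    calc Fintype.card {t : Fin r → Fin k //
          t x.1 = x.2 ∧ t y.1 = y.2 ∧ t z.1 = z.2 ∧ t w.1 = w.2}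
        ≤ Fintype.card ({v : Fin r // v ∉ s} → Fin k) := Fintype.card_le_of_injective _ hinj
      _ = k ^ (r - 4) := by
          rw [Fintype.card_fun, Fintype.card_fin]
          congr 1
          rw [Fintype.card_subtype_compl, Fintype.card_fin]
          congr 1
          rw [← hscard]
          exact Fintype.card_coe s
  · rw [not_and_or, not_and_or, not_and_or] at hd
    have : (Finset.univ.filter (fun t : Fin r → Fin k =>
        t x.1 = x.2 ∧ t y.1 = y.2 ∧ t z.1 = z.2 ∧ t w.1 = w.2)) = ∅ := by
      rw [filter_eq_empty_iff]
      intro t _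
      rintro ⟨c1, c2, c3, c4⟩
      rcases hd with h | h | h
      · rcases not_not.1 h with h
        have : x.2 = z.2 := by rw [← c1, ← c3, h]
        exact hxz (Prod.ext h this)
      · rcases not_not.1 h with h
        have : x.2 = w.2 := by rw [← c1, ← c4, h]
        exact hxw (Prod.ext h this)
      · rcases h with h | h
        · rcases not_not.1 h with h
          have : y.2 = z.2 := by rw [← c2, ← c3, h]
          exact hyz (Prod.ext h this)
        · rcases not_not.1 h with h
          have : y.2 = w.2 := by rw [← c2, ← c4, h]
          exact hyw (Prod.ext h this)
    rw [this]
    simp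

def Fits {r k : ℕ} (t : Fin r → Fin k) (p : Sym2 (Sym2 (Fin r × Fin k))) : Prop :=
  ∀ e ∈ p, ∀ a ∈ e, t a.1 = a.2

open Classical in
lemma fits_card_bound {r k : ℕ} (hr : 4 ≤ r) (f : Fin r × Fin k → ℝ × ℝ)
    (p : Sym2 (Sym2 (Fin r × Fin k)))
    (hp1 : ∀ e ∈ p, e ∈ (completeBalanced r k).edgeSet)
    (hp2 : p ∈ Sym2.fromRel ⟨edgesCross_symm f⟩) :
    (Finset.univ.filter (fun t : Fin r → Fin k => Fits t p)).card ≤ k ^ (r - 4) := by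
  induction p using Sym2.inductionOn with
  | hf e₁ e₂ =>
    induction e₁ using Sym2.inductionOn with
    | hf x y =>
      induction e₂ using Sym2.inductionOn with
      | hf z w =>
        have hxy : x.1 ≠ y.1 := by
          have := hp1 s(x, y) (by simp)
          simpa [completeBalanced] using this
        have hzw : z.1 ≠ w.1 := by
          have := hp1 s(z, w) (by simp)
          simpa [completeBalanced] using this
        rw [Sym2.fromRel_prop] at hp2
        have hx := hp2.1 x (by simp)
        have hy := hp2.1 y (by simp)
        rw [Sym2.mem_iff, not_or] at hx hy
        have heq : (Finset.univ.filter (fun t : Fin r → Fin k => Fits t s(s(x,y), s(z,w))))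
            = (Finset.univ.filter (fun t : Fin r → Fin k =>
                t x.1 = x.2 ∧ t y.1 = y.2 ∧ t z.1 = z.2 ∧ t w.1 = w.2)) := by
          apply Finset.filter_congr
          intro t _
          constructor
          · intro h
            exact ⟨h s(x,y) (by simp) x (by simp), h s(x,y) (by simp) y (by simp),
              h s(z,w) (by simp) z (by simp), h s(z,w) (by simp) w (by simp)⟩
          · rintro ⟨c1, c2, c3, c4⟩ e he a ha
            rw [Sym2.mem_iff] at he
            rcases he with rfl | rfl <;> rw [Sym2.mem_iff] at ha <;>
              rcases ha with rfl | rfl <;> assumption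
        rw [heq]
        exact fiber_bound hr x y z w hxy hzw hx.1 hx.2 hy.1 hy.2

lemma fromRel_map {V W : Type*} (f : W → ℝ × ℝ) (g : V → W) (hg : Function.Injective g)
    (p : Sym2 (Sym2 V)) (hp : p ∈ Sym2.fromRel ⟨edgesCross_symm (f ∘ g)⟩) :
    Sym2.map (Sym2.map g) p ∈ Sym2.fromRel ⟨edgesCross_symm f⟩ := by
  induction p using Sym2.inductionOn with
  | hf e₁ e₂ =>
    rw [Sym2.fromRel_prop] at hp
    rw [Sym2.map_pair_eq, Sym2.fromRel_prop]
    exact crossing_map f g hg hp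

/-- `rcr(K_n^r) ≥ rcr(K_r)·(n/r)⁴` (here `n = r·k`, `k = n/r`). -/
theorem stmt7 (r k n : ℕ) (hr : 4 ≤ r) (hk : 1 ≤ k) (hn : n = r * k) :
    rcr (⊤ : SimpleGraph (Fin r)) * k ^ 4 ≤ rcr (completeBalanced r k) := by
  classical
  obtain ⟨f₀, hf₀⟩ := exists_drawing r k
  refine le_csInf ⟨crossingNumber (completeBalanced r k) f₀, ⟨f₀, hf₀, rfl⟩⟩ ?_
  rintro m ⟨f, hf, rfl⟩
  set C : Set (Sym2 (Sym2 (Fin r × Fin k))) :=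
    {p | (∀ e ∈ p, e ∈ (completeBalanced r k).edgeSet) ∧
      p ∈ Sym2.fromRel ⟨edgesCross_symm f⟩} with hC
  have hCfin : C.Finite := Set.toFinite _
  set Cf : Finset (Sym2 (Sym2 (Fin r × Fin k))) := hCfin.toFinset with hCf
  -- per-transversal claim
  have claim1 : ∀ t : Fin r → Fin k,
      rcr (⊤ : SimpleGraph (Fin r)) ≤ (Cf.filter (fun p => Fits t p)).card := by
    intro t
    set g : Fin r → Fin r × Fin k := fun v => (v, t v) with hgdef
    have hg : Function.Injective g := fun a b h => congrArg Prod.fst h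
    have hdraw : IsRectilinearDrawing (f ∘ g) := by
      refine ⟨hf.1.comp hg, fun a b c hab hac hbc => ?_⟩
      exact hf.2 (g a) (g b) (g c) (hg.ne hab) (hg.ne hac) (hg.ne hbc)
    have h1 : rcr (⊤ : SimpleGraph (Fin r)) ≤ crossingNumber ⊤ (f ∘ g) :=
      Nat.sInf_le ⟨f ∘ g, hdraw, rfl⟩
    refine h1.trans ?_
    set S : Set (Sym2 (Sym2 (Fin r))) :=
      {p | (∀ e ∈ p, e ∈ (⊤ : SimpleGraph (Fin r)).edgeSet) ∧
        p ∈ Sym2.fromRel ⟨edgesCross_symm (f ∘ g)⟩} with hS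
    have hcr : crossingNumber ⊤ (f ∘ g) = S.ncard := rfl
    have himg : (Sym2.map (Sym2.map g)) '' S ⊆ ↑(Cf.filter (fun p => Fits t p)) := by
      rintro q ⟨p, hp, rfl⟩
      rw [Finset.mem_coe, Finset.mem_filter]
      refine ⟨?_, ?_⟩
      · rw [hCf, Set.Finite.mem_toFinset]
        refine ⟨?_, fromRel_map f g hg p hp.2⟩
        intro e he
        rw [Sym2.mem_map] at he
        obtain ⟨e', he', rfl⟩ := he
        have := hp.1 e' he'
        induction e' using Sym2.inductionOn with
        | hf a b =>
          rw [SimpleGraph.mem_edgeSet] at this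
          rw [Sym2.map_pair_eq, SimpleGraph.mem_edgeSet]
          simpa [completeBalanced, g] using this.ne
      · intro e he a ha
        rw [Sym2.mem_map] at he
        obtain ⟨e', _, rfl⟩ := he
        rw [Sym2.mem_map] at ha
        obtain ⟨v, _, rfl⟩ := ha
        rfl
    calc crossingNumber ⊤ (f ∘ g) = S.ncard := hcr
      _ = ((Sym2.map (Sym2.map g)) '' S).ncard :=
          (Set.ncard_image_of_injective S (Sym2.map.injective (Sym2.map.injective hg))).symm
      _ ≤ (↑(Cf.filter (fun p => Fits t p)) : Set _).ncard :=
          Set.ncard_le_ncard himg (Set.toFinite _)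
      _ = (Cf.filter (fun p => Fits t p)).card := Set.ncard_coe_finset _
  -- double counting
  have sum1 : k ^ r * rcr (⊤ : SimpleGraph (Fin r)) ≤
      ∑ t : Fin r → Fin k, (Cf.filter (fun p => Fits t p)).card := by
    have := Finset.card_nsmul_le_sum Finset.univ
      (fun t : Fin r → Fin k => (Cf.filter (fun p => Fits t p)).card)
      (rcr (⊤ : SimpleGraph (Fin r))) (fun t _ => claim1 t)
    rwa [Finset.card_univ, Fintype.card_fun, Fintype.card_fin, Fintype.card_fin,
      smul_eq_mul] at this
  have sum2 : ∑ t : Fin r → Fin k, (Cf.filter (fun p => Fits t p)).card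
      = ∑ p ∈ Cf, (Finset.univ.filter (fun t : Fin r → Fin k => Fits t p)).card := by
    simp_rw [Finset.card_filter]
    rw [Finset.sum_comm]
  have sum3 : ∑ p ∈ Cf, (Finset.univ.filter (fun t : Fin r → Fin k => Fits t p)).card
      ≤ Cf.card * k ^ (r - 4) := by
    rw [← smul_eq_mul, ← Finset.sum_const]
    apply Finset.sum_le_sum
    intro p hp
    rw [hCf, Set.Finite.mem_toFinset] at hp
    exact fits_card_bound hr f p hp.1 hp.2
  have hcard : crossingNumber (completeBalanced r k) f = Cf.card := by
    rw [hCf]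
    exact Set.ncard_eq_toFinset_card C hCfin
  have hfinal : rcr (⊤ : SimpleGraph (Fin r)) * k ^ r ≤
      crossingNumber (completeBalanced r k) f * k ^ (r - 4) := by
    rw [hcard, Nat.mul_comm]
    exact sum1.trans (sum2 ▸ sum3)
  have hpow : k ^ r = k ^ 4 * k ^ (r - 4) := by
    rw [← pow_add, Nat.add_sub_cancel' hr]
  rw [hpow, ← Nat.mul_assoc] at hfinal
  exact Nat.le_of_mul_le_mul_right hfinal (Nat.pow_pos hk)
end
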